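/- Over R = ℤ[a,a⁻¹,c,c⁻¹], the module M presented by generators B, D, Θ and relations (a+c−1)B + a(a−1)D + (a−1)Θ = 0 and c(1−c)B + D + (c−1)Θ = 0 is isomorphic to the module presented by generators α, β with the single relation (ac+a−1)α + 2a²c·β = 0, and hence is torsion-free. -/

import Mathlib

open LaurentPolynomial in
theorem stmt11_iso {A : Type*} [CommRing A] (a c : A) :
    Nonempty (((Fin 3 → A) ⧸
      Submodule.span A {![a + c - 1, a * (a - 1), a - 1], ![c * (1 - c), 1, c - 1]}) ≃ₗ[A]
      ((Fin 2 → A) ⧸ Submodule.span A {![a * c + a - 1, 2 * a ^ 2 * c]})) := by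
  set v1 : Fin 3 → A := ![a + c - 1, a * (a - 1), a - 1] with hv1
  set v2 : Fin 3 → A := ![c * (1 - c), 1, c - 1] with hv2
  set w : Fin 2 → A := ![a * c + a - 1, 2 * a ^ 2 * c] with hw
  set S1 : Submodule A (Fin 3 → A) := Submodule.span A {v1, v2} with hS1
  set S2 : Submodule A (Fin 2 → A) := Submodule.span A {w} with hS2
  set F : (Fin 3 → A) →ₗ[A] (Fin 2 → A) :=
    Matrix.toLin' !![1, 0, c; a + 1, c - 1, a * c + c - 1] with hF
  set G : (Fin 2 → A) →ₗ[A] (Fin 3 → A) :=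
    Matrix.toLin' !![1 - c - a * c, c; 0, 0; a + 1, -1] with hG
  have hFv1 : F v1 = w := by
    funext i; fin_cases i <;>
      simp [hF, hv1, hw, Matrix.toLin'_apply, Matrix.mulVec, dotProduct,
        Fin.sum_univ_three] <;> ring
  have hFv2 : F v2 = 0 := by
    funext i; fin_cases i <;>
      simp [hF, hv2, Matrix.toLin'_apply, Matrix.mulVec, dotProduct,
        Fin.sum_univ_three] <;> ring
  have hGw : G w = v1 - (a * (a - 1)) • v2 := by
    funext i; fin_cases i <;>
      simp [hG, hv1, hv2, hw, Matrix.toLin'_apply, Matrix.mulVec, dotProduct,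
        Fin.sum_univ_two] <;> ring
  have hGF : ∀ x : Fin 3 → A, G (F x) = x - (x 1) • v2 := by
    intro x
    funext i; fin_cases i <;>
      simp [hF, hG, hv2, Matrix.toLin'_apply, Matrix.mulVec, dotProduct,
        Fin.sum_univ_three, Fin.sum_univ_two] <;> ring
  have hFG : ∀ y : Fin 2 → A, F (G y) = y := by
    intro y
    funext i; fin_cases i <;>
      simp [hF, hG, Matrix.toLin'_apply, Matrix.mulVec, dotProduct,
        Fin.sum_univ_three, Fin.sum_univ_two] <;> ring
  have hmemv1 : v1 ∈ S1 := Submodule.subset_span (Set.mem_insert _ _)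
  have hmemv2 : v2 ∈ S1 := Submodule.subset_span (Set.mem_insert_of_mem _ rfl)
  have hFle : S1 ≤ Submodule.comap F S2 := by
    rw [hS1, Submodule.span_le]
    rintro t ht
    simp only [Set.mem_insert_iff, Set.mem_singleton_iff] at ht
    rcases ht with rfl | rfl
    · rw [SetLike.mem_coe, Submodule.mem_comap, hFv1]
      exact Submodule.subset_span rfl
    · rw [SetLike.mem_coe, Submodule.mem_comap, hFv2]
      exact Submodule.zero_mem _
  have hGle : S2 ≤ Submodule.comap G S1 := by
    rw [hS2, Submodule.span_le]
    rintro t ht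
    simp only [Set.mem_singleton_iff] at ht
    subst ht
    rw [SetLike.mem_coe, Submodule.mem_comap, hGw]
    exact Submodule.sub_mem _ hmemv1 (Submodule.smul_mem _ _ hmemv2)
  refine ⟨LinearEquiv.ofLinear (Submodule.mapQ S1 S2 F hFle) (Submodule.mapQ S2 S1 G hGle) ?_ ?_⟩
  · apply Submodule.linearMap_qext
    apply LinearMap.ext
    intro y
    simp only [LinearMap.comp_apply, Submodule.mkQ_apply, Submodule.mapQ_apply,
      LinearMap.id_apply]
    rw [hFG]
  · apply Submodule.linearMap_qext
    apply LinearMap.ext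
    intro x
    simp only [LinearMap.comp_apply, Submodule.mkQ_apply, Submodule.mapQ_apply,
      LinearMap.id_apply]
    rw [hGF]
    rw [Submodule.Quotient.eq]
    have : x - x 1 • v2 - x = -(x 1 • v2) := by abel
    rw [this]
    exact Submodule.neg_mem _ (Submodule.smul_mem _ _ hmemv2)

theorem prime_two_laurent (A : Type*) [CommRing A] [IsDomain A] (h2 : Prime (2 : A)) :
    Prime (2 : LaurentPolynomial A) := by
  haveI := LaurentPolynomial.isLocalization (R := A)
  have hC2 : (Polynomial.C (2 : A)) = (2 : Polynomial A) := map_ofNat Polynomial.C 2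
  have hpx : Prime (2 : Polynomial A) := by
    rw [← hC2]; exact (Polynomial.prime_C_iff).mpr h2
  have hd : Disjoint ((Submonoid.powers (Polynomial.X : Polynomial A)) : Set (Polynomial A))
      ((Ideal.span {(2 : Polynomial A)}) : Set (Polynomial A)) := by
    rw [Set.disjoint_left]
    rintro x ⟨n, rfl⟩ hx
    rw [SetLike.mem_coe, Ideal.mem_span_singleton] at hx
    obtain ⟨q, hq⟩ := hx
    have hco := congrArg (fun p => Polynomial.coeff p n) hq
    simp [Polynomial.coeff_X_pow] at hco
    exact h2.not_unit (isUnit_of_dvd_one ⟨q.coeff n, hco⟩)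
  have hIP : (Ideal.map (algebraMap (Polynomial A) (LaurentPolynomial A))
      (Ideal.span {(2 : Polynomial A)})).IsPrime :=
    IsLocalization.isPrime_of_isPrime_disjoint _ _ _
      ((Ideal.span_singleton_prime hpx.ne_zero).mpr hpx) hd
  have hmap : Ideal.map (algebraMap (Polynomial A) (LaurentPolynomial A))
      (Ideal.span {(2 : Polynomial A)}) = Ideal.span {(2 : LaurentPolynomial A)} := by
    rw [Ideal.map_span, Set.image_singleton, map_ofNat]
  have h20 : (2 : LaurentPolynomial A) ≠ 0 := by
    have hinj := IsLocalization.injective (M := Submonoid.powers (Polynomial.X : Polynomial A))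
      (LaurentPolynomial A) (powers_le_nonZeroDivisors_of_noZeroDivisors Polynomial.X_ne_zero)
    intro h
    exact hpx.ne_zero (hinj (by rw [map_ofNat, map_zero]; exact h))
  rw [← Ideal.span_singleton_prime h20]
  rwa [hmap] at hIP

theorem stmt11_eps : ∃ ε : LaurentPolynomial (LaurentPolynomial ℤ) →+* ZMod 2,
    ε (LaurentPolynomial.C (LaurentPolynomial.T 1)) = 1 ∧ ε (LaurentPolynomial.T 1) = 1 := by
  haveI h1 := LaurentPolynomial.isLocalization (R := ℤ)
  haveI h2 := LaurentPolynomial.isLocalization (R := LaurentPolynomial ℤ)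
  set g1 : Polynomial ℤ →+* ZMod 2 := Polynomial.eval₂RingHom (Int.castRingHom (ZMod 2)) 1
    with hg1def
  have hg1 : ∀ y : Submonoid.powers (Polynomial.X : Polynomial ℤ), IsUnit (g1 y) := by
    rintro ⟨_, n, rfl⟩
    simp [hg1def]
  set ε1 : LaurentPolynomial ℤ →+* ZMod 2 := IsLocalization.lift hg1 with hε1def
  have hε1T : ε1 (LaurentPolynomial.T 1) = 1 := by
    rw [← Polynomial.toLaurent_X, ← LaurentPolynomial.algebraMap_eq_toLaurent, hε1def,
      IsLocalization.lift_eq]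
    simp [hg1def]
  set g2 : Polynomial (LaurentPolynomial ℤ) →+* ZMod 2 := Polynomial.eval₂RingHom ε1 1
    with hg2def
  have hg2 : ∀ y : Submonoid.powers (Polynomial.X : Polynomial (LaurentPolynomial ℤ)),
      IsUnit (g2 y) := by
    rintro ⟨_, n, rfl⟩
    simp [hg2def]
  refine ⟨IsLocalization.lift hg2, ?_, ?_⟩
  · rw [← Polynomial.toLaurent_C, ← LaurentPolynomial.algebraMap_eq_toLaurent,
      IsLocalization.lift_eq]
    simp [hg2def, hε1T]
  · rw [← Polynomial.toLaurent_X, ← LaurentPolynomial.algebraMap_eq_toLaurent,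
      IsLocalization.lift_eq]
    simp [hg2def]





set_option maxHeartbeats 1000000 in
open LaurentPolynomial in
/-- Over `R = ℤ[a,a⁻¹,c,c⁻¹]` (realized as `ℤ[a,a⁻¹][c,c⁻¹]`, `a = C (T 1)`, `c = T 1`),
the module presented by generators `B, D, Θ` and relations
`(a+c−1)B + a(a−1)D + (a−1)Θ = 0`, `c(1−c)B + D + (c−1)Θ = 0` is isomorphic to the module
presented by two generators and the single relation `(ac+a−1)α + 2a²c·β = 0`; and it is
torsion-free. -/
theorem stmt11 :
    letI R := LaurentPolynomial (LaurentPolynomial ℤ)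
    letI a : R := LaurentPolynomial.C (T 1)
    letI c : R := T 1
    letI M := (Fin 3 → R) ⧸
      Submodule.span R {![a + c - 1, a * (a - 1), a - 1], ![c * (1 - c), 1, c - 1]}
    letI N := (Fin 2 → R) ⧸ Submodule.span R {![a * c + a - 1, 2 * a ^ 2 * c]}
    Nonempty (M ≃ₗ[R] N) ∧ ∀ (r : R) (m : M), r • m = 0 → r = 0 ∨ m = 0 := by
  set R := LaurentPolynomial (LaurentPolynomial ℤ) with hR
  set a : R := LaurentPolynomial.C (T 1) with ha
  set c : R := T 1 with hc
  haveI : IsDomain (LaurentPolynomial ℤ) := NoZeroDivisors.to_isDomain _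
  haveI : IsDomain R := NoZeroDivisors.to_isDomain _
  have hp2 : Prime (2 : R) := prime_two_laurent _ (prime_two_laurent _ Int.prime_two)
  obtain ⟨ε, hεa, hεc⟩ := stmt11_eps
  obtain ⟨e⟩ := stmt11_iso a c
  have tfN : ∀ (r : R) (n : (Fin 2 → R) ⧸
      Submodule.span R {![a * c + a - 1, 2 * a ^ 2 * c]}), r • n = 0 → r = 0 ∨ n = 0 := by
    intro r n hrn
    by_cases hr : r = 0
    · exact Or.inl hr
    right
    obtain ⟨x, rfl⟩ := Submodule.Quotient.mk_surjective _ n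
    rw [← Submodule.Quotient.mk_smul, Submodule.Quotient.mk_eq_zero,
      Submodule.mem_span_singleton] at hrn
    obtain ⟨s, hs⟩ := hrn
    have h0 := congrFun hs 0
    have h1 := congrFun hs 1
    simp only [Pi.smul_apply, smul_eq_mul, Matrix.cons_val_zero, Matrix.cons_val_one,
      Matrix.head_cons] at h0 h1
    -- h0 : s * (a * c + a - 1) = r * x 0,  h1 : s * (2 * a ^ 2 * c) = r * x 1
    have key : (a * c + a - 1) * x 1 = 2 * a ^ 2 * c * x 0 :=
      mul_left_cancel₀ hr (by linear_combination 2 * a ^ 2 * c * h0 - (a * c + a - 1) * h1)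
    have hdvd : (2 : R) ∣ (a * c + a - 1) * x 1 := ⟨a ^ 2 * c * x 0, by linear_combination key⟩
    rcases (hp2.dvd_mul.mp hdvd) with hw | hx1
    · exfalso
      obtain ⟨y, hy⟩ := hw
      have hεy := congrArg ε hy
      simp only [map_add, map_sub, map_mul, map_one, map_ofNat, hεa, hεc] at hεy
      rw [show ((2 : ZMod 2)) = 0 from rfl, zero_mul] at hεy
      rw [show ε a = 1 from hεa, show ε c = 1 from hεc] at hεy
      revert hεy; decide
    · obtain ⟨t, ht⟩ := hx1
      have key2 : (a * c + a - 1) * t = a ^ 2 * c * x 0 :=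
        mul_left_cancel₀ hp2.ne_zero (by linear_combination key - (a * c + a - 1) * ht)
      have hu : IsUnit (a ^ 2 * c) :=
        (((isUnit_T 1).map (LaurentPolynomial.C (R := LaurentPolynomial ℤ))).pow 2).mul
          (isUnit_T 1)
      obtain ⟨v, hv⟩ := hu.exists_right_inv
      rw [Submodule.Quotient.mk_eq_zero, Submodule.mem_span_singleton]
      refine ⟨t * v, ?_⟩
      funext i
      fin_cases i <;>
        simp only [Fin.zero_eta, Fin.mk_one, Fin.isValue, Pi.smul_apply, smul_eq_mul,
          Matrix.cons_val_zero, Matrix.cons_val_one, Matrix.head_cons]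
      · linear_combination v * key2 + x 0 * hv
      · linear_combination 2 * t * hv - ht
  exact ⟨⟨e⟩, fun r m hrm =>
    (tfN r (e m) (by rw [← e.map_smul, hrm, e.map_zero])).imp id fun h => e.map_eq_zero_iff.mp h⟩
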